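/- arXiv:1301.5658 — 6 statements merged into one kernel-verified Lean document; each statement's English description precedes it below -/
import Mathlib

section
/- If κ is an uncountable cardinal, the Cantor cube 2^κ is not a sequential space: the set of characteristic functions of at most countable subsets of κ is sequentially closed but not closed. -/
open Topology Classical


/-- For uncountable `κ`, the Cantor cube `2^κ` is not sequential: the set of
characteristic functions of at most countable subsets of `κ` is sequentially
closed but not closed. -/
theorem cantorCube_not_sequential {ι : Type*} [Uncountable ι] :
    IsSeqClosed {x : ι → Bool | Set.Countable {a : ι | x a = true}} ∧
    ¬ IsClosed {x : ι → Bool | Set.Countable {a : ι | x a = true}} ∧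
    ¬ SequentialSpace (ι → Bool) := by
  set S : Set (ι → Bool) := {x : ι → Bool | Set.Countable {a : ι | x a = true}} with hSdef
  have hseq : IsSeqClosed S := by
    intro x p hx hp
    have hpt : ∀ a, Filter.Tendsto (fun n => x n a) Filter.atTop (𝓝 (p a)) :=
      fun a => (tendsto_pi_nhds.mp hp) a
    have hsub : {a : ι | p a = true} ⊆ ⋃ n, {a : ι | x n a = true} := by
      intro a ha
      have h := hpt a
      rw [nhds_discrete, Filter.tendsto_pure] at h
      obtain ⟨n, hn⟩ := h.exists
      exact Set.mem_iUnion.mpr ⟨n, show x n a = true from hn.trans ha⟩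
    exact (Set.countable_iUnion fun n => hx n).mono hsub
  have hdense : Dense S := by
    intro x
    rw [mem_closure_iff_nhds]
    intro U hU
    rw [nhds_pi, Filter.mem_pi] at hU
    obtain ⟨I, hIfin, t, ht, hsub⟩ := hU
    refine ⟨fun i => if h : i ∈ I then x i else false, hsub ?_, ?_⟩
    · intro i hi
      simpa [hi] using mem_of_mem_nhds (ht i)
    · apply (hIfin.countable).mono
      intro a ha
      by_contra h
      simp [h] at ha
  have hnc : ¬ IsClosed S := by
    intro hcl
    have hmem : (fun _ : ι => true) ∈ S := by
      rw [← hcl.closure_eq]; exact hdense _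
    have : Set.Countable (Set.univ : Set ι) := by
      simpa [hSdef] using hmem
    exact not_countable (Set.countable_univ_iff.mp this)
  exact ⟨hseq, hnc, fun _ => hnc hseq.isClosed⟩
end

section
/- If κ is an uncountable cardinal, then the Aleksandrov cube 2^κ is not a sequential space: the set S = {x ∈ 2^κ : |x^{-1}({0})| ≤ ℵ₀} is dense (hence not closed) but sequentially closed. -/
/-- The two-point space `{0,1}` with topology `{∅, {0}, {0,1}}`, where `false`
plays the role of `0` and `true` of `1`. -/
def alexBool : TopologicalSpace Bool := TopologicalSpace.generateFrom {{false}}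

/-- The Aleksandrov cube of weight `κ`: the product of `κ` copies of `alexBool`. -/
def alexCube (ι : Type*) : TopologicalSpace (ι → Bool) :=
  @Pi.topologicalSpace ι (fun _ => Bool) (fun _ => alexBool)

lemma alexBool_isOpen_false : @IsOpen Bool alexBool {false} :=
  TopologicalSpace.isOpen_generateFrom_of_mem rfl

lemma alexBool_false_mem_nhds {b : Bool} (hb : b = false) :
    {false} ∈ @nhds Bool alexBool b := by
  letI := alexBool
  exact alexBool_isOpen_false.mem_nhds (by simp [hb])

/-- For uncountable `κ`, the Aleksandrov cube `2^κ` is not sequential: the set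
`S = {x : |x⁻¹({0})| ≤ ℵ₀}` is dense (hence not closed) but sequentially
closed. -/
theorem alexCube_not_sequential {ι : Type*} [Uncountable ι] :
    @Dense _ (alexCube ι) {x : ι → Bool | Set.Countable {a : ι | x a = false}} ∧
    ¬ @IsClosed _ (alexCube ι) {x : ι → Bool | Set.Countable {a : ι | x a = false}} ∧
    @IsSeqClosed _ (alexCube ι) {x : ι → Bool | Set.Countable {a : ι | x a = false}} ∧
    ¬ @SequentialSpace _ (alexCube ι) := by
  classical
  letI : TopologicalSpace (ι → Bool) := alexCube ι
  set S : Set (ι → Bool) := {x : ι → Bool | Set.Countable {a : ι | x a = false}} with hS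
  have hdense : Dense S := by
    intro x
    rw [mem_closure_iff]
    intro O hO hxO
    obtain ⟨I, u, hu, hsub⟩ := (@isOpen_pi_iff ι (fun _ => Bool) (fun _ => alexBool) O).mp hO x hxO
    refine ⟨fun a => if a ∈ I then x a else true, hsub ?_, ?_⟩
    · intro a ha
      show (if a ∈ I then x a else true) ∈ u a
      rw [if_pos (Finset.mem_coe.mp ha)]
      exact (hu a ha).2
    · apply Set.Countable.mono _ I.countable_toSet
      intro a ha
      by_contra h
      have ha' : (if a ∈ I then x a else true) = false := ha
      rw [if_neg (fun hmem => h (Finset.mem_coe.mpr hmem))] at ha'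
      exact Bool.noConfusion ha'
  have hseq : IsSeqClosed S := by
    intro x p hx hp
    have hsub : {a : ι | p a = false} ⊆ ⋃ n, {a : ι | x n a = false} := by
      intro a ha
      have hcoord : Filter.Tendsto (fun n => x n a) Filter.atTop (@nhds Bool alexBool (p a)) :=
        (@Continuous.tendsto _ _ (alexCube ι) alexBool _ (@continuous_apply ι (fun _ => Bool) (fun _ => alexBool) a) p).comp hp
      have : ∀ᶠ n in Filter.atTop, x n a ∈ ({false} : Set Bool) :=
        hcoord (alexBool_false_mem_nhds (by simpa using ha))
      obtain ⟨n, hn⟩ := this.exists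
      exact Set.mem_iUnion.mpr ⟨n, hn⟩
    exact Set.Countable.mono hsub (Set.countable_iUnion fun n => hx n)
  have hne : S ≠ Set.univ := by
    intro h
    have : (fun _ : ι => false) ∈ S := h ▸ Set.mem_univ _
    simp only [hS, Set.mem_setOf_eq] at this
    have : Set.Countable (Set.univ : Set ι) := by simpa using this
    have : Countable ι := Set.countable_univ_iff.mp this
    exact not_countable this
  have hclosed : ¬ IsClosed S := by
    intro h
    apply hne
    rw [← h.closure_eq, hdense.closure_eq]
  refine ⟨hdense, hclosed, hseq, fun h => hclosed (hseq.isClosed)⟩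
end

section
/- A set F in a complete Boolean algebra B is closed in the topology O_{λ_ls} if and only if F is upward closed and ⋀_n x_n ∈ F for every decreasing sequence (x_n) in F. Equivalently, F is upward closed and limsup x ∈ F for every sequence x in F. -/
/-- The liminf of a sequence in a complete Boolean algebra. -/
def bLiminf {B : Type*} [CompleteBooleanAlgebra B] (x : ℕ → B) : B :=
  ⨆ k, ⨅ n, ⨅ _ : k ≤ n, x n

/-- The limsup of a sequence in a complete Boolean algebra. -/
def bLimsup {B : Type*} [CompleteBooleanAlgebra B] (x : ℕ → B) : B :=
  ⨅ k, ⨆ n, ⨆ _ : k ≤ n, x n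

/-- The convergence `λ_ls(x) = (limsup x)↑`. -/
def lamLs {B : Type*} [CompleteBooleanAlgebra B] (x : ℕ → B) : Set B :=
  {b : B | bLimsup x ≤ b}

/-- The convergence `λ_li(x) = (liminf x)↓`. -/
def lamLi {B : Type*} [CompleteBooleanAlgebra B] (x : ℕ → B) : Set B :=
  {b : B | b ≤ bLiminf x}

/-- The topology `O_λ` generated by a convergence `λ`: a set is open iff
whenever it meets `λ(x)` it contains all but finitely many terms of `x`. -/
def convTop {X : Type*} (lam : (ℕ → X) → Set X) : TopologicalSpace X where
  IsOpen O := ∀ x : ℕ → X, (O ∩ lam x).Nonempty → ∀ᶠ n in Filter.atTop, x n ∈ O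
  isOpen_univ := fun x _ => Filter.Eventually.of_forall fun _ => Set.mem_univ _
  isOpen_inter := by
    intro s t hs ht x hx
    obtain ⟨a, has, hal⟩ := hx
    exact ((hs x ⟨a, has.1, hal⟩).and (ht x ⟨a, has.2, hal⟩)).mono
      fun n hn => ⟨hn.1, hn.2⟩
  isOpen_sUnion := by
    intro S hS x hx
    obtain ⟨a, haU, hal⟩ := hx
    obtain ⟨O, hOS, haO⟩ := haU
    exact (hS O hOS x ⟨a, haO, hal⟩).mono fun n hn => Set.mem_sUnion.2 ⟨O, hOS, hn⟩

/-- A set `F` in a complete Boolean algebra is closed in `O_{λ_ls}` iff it is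
upward closed and closed under infima of decreasing sequences, equivalently,
upward closed and closed under limsups of its sequences. -/
theorem isClosed_lamLs_iff {B : Type*} [CompleteBooleanAlgebra B] (F : Set B) :
    (@IsClosed B (convTop lamLs) F ↔
      ((∀ a b : B, a ∈ F → a ≤ b → b ∈ F) ∧
        ∀ x : ℕ → B, (∀ n, x n ∈ F) → Antitone x → (⨅ n, x n) ∈ F)) ∧
    (@IsClosed B (convTop lamLs) F ↔
      ((∀ a b : B, a ∈ F → a ≤ b → b ∈ F) ∧
        ∀ x : ℕ → B, (∀ n, x n ∈ F) → bLimsup x ∈ F)) := by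
  -- limsup of an antitone sequence is its infimum
  have hlim : ∀ x : ℕ → B, Antitone x → bLimsup x = ⨅ n, x n := by
    intro x hx
    unfold bLimsup
    refine iInf_congr fun k => le_antisymm ?_ ?_
    · exact iSup_le fun n => iSup_le fun hn => hx hn
    · exact le_iSup_of_le k (le_iSup_of_le (le_refl k) le_rfl)
  -- closedness ↔ limsup version
  have hiso : @IsClosed B (convTop lamLs) F ↔
      (∀ x : ℕ → B, (Fᶜ ∩ lamLs x).Nonempty → ∀ᶠ n in Filter.atTop, x n ∈ Fᶜ) :=
    ⟨fun h => h.isOpen_compl, fun h => @IsClosed.mk B (convTop lamLs) F h⟩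
  have hmain : @IsClosed B (convTop lamLs) F ↔
      ((∀ a b : B, a ∈ F → a ≤ b → b ∈ F) ∧
        ∀ x : ℕ → B, (∀ n, x n ∈ F) → bLimsup x ∈ F) := by
    rw [hiso]
    constructor
    · intro h
      constructor
      · intro a b ha hab
        by_contra hb
        have := h (fun _ => a) ⟨b, hb, by
          simp only [lamLs, bLimsup, Set.mem_setOf_eq]
          exact iInf_le_of_le 0 (iSup_le fun n => iSup_le fun _ => hab)⟩
        obtain ⟨n, hn⟩ := this.exists
        exact hn (ha)
      · intro x hx
        by_contra hls
        have := h x ⟨bLimsup x, hls, le_rfl⟩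
        obtain ⟨n, hn⟩ := this.exists
        exact hn (hx n)
    · rintro ⟨hup, hls⟩ x ⟨b, hb, hbl⟩
      by_contra hev
      have hfreq : ∀ k : ℕ, ∃ n, k ≤ n ∧ x n ∈ F := by
        intro k
        rcases Filter.frequently_atTop.1 ((Filter.not_eventually.1 hev)) k with ⟨n, hn, hxn⟩
        exact ⟨n, hn, not_not.1 hxn⟩
      set w : ℕ → B := fun k => ⨆ n, ⨆ _ : k ≤ n, x n with hw
      have hwF : ∀ k, w k ∈ F := by
        intro k
        obtain ⟨n, hkn, hnF⟩ := hfreq k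
        exact hup _ _ hnF (le_iSup_of_le n (le_iSup_of_le hkn le_rfl))
      have hwa : Antitone w := by
        intro k k' hk
        exact iSup_le fun n => iSup_le fun hn =>
          le_iSup_of_le n (le_iSup_of_le (hk.trans hn) le_rfl)
      have hinfw : bLimsup x = ⨅ k, w k := rfl
      have : bLimsup x ∈ F := by
        rw [hinfw, ← hlim w hwa]
        exact hls w hwF
      exact hb (hup _ _ this hbl)
  refine ⟨?_, hmain⟩
  rw [hmain]
  constructor
  · rintro ⟨hup, hls⟩
    refine ⟨hup, fun x hx hax => ?_⟩
    rw [← hlim x hax]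
    exact hls x hx
  · rintro ⟨hup, ha⟩
    refine ⟨hup, fun x hx => ?_⟩
    set w : ℕ → B := fun k => ⨆ n, ⨆ _ : k ≤ n, x n with hw
    have hwF : ∀ k, w k ∈ F := fun k =>
      hup _ _ (hx k) (le_iSup_of_le k (le_iSup_of_le (le_refl k) le_rfl))
    have hwa : Antitone w := fun k k' hk =>
      iSup_le fun n => iSup_le fun hn =>
        le_iSup_of_le n (le_iSup_of_le (hk.trans hn) le_rfl)
    exact ha w hwF hwa
end

section
/- For each a in a complete Boolean algebra B, the map f_a : B → B defined by f_a(x) = x ∧ a is continuous with respect to the topology O_{λ_ls}. -/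
/-- For each `a`, the map `f_a(x) = x ∧ a` is continuous on `⟨B, O_{λ_ls}⟩`. -/
theorem continuous_inf_lamLs {B : Type*} [CompleteBooleanAlgebra B] (a : B) :
    @Continuous B B (convTop lamLs) (convTop lamLs) (fun x : B => x ⊓ a) := by
  rw [continuous_def]
  intro O hO x hx
  obtain ⟨b, hbO, hbl⟩ := hx
  have key : bLimsup (fun n => x n ⊓ a) ≤ b ⊓ a := by
    refine le_inf ?_ ?_
    · refine le_trans ?_ hbl
      exact iInf_mono fun k => iSup_mono fun n => iSup_mono fun h => inf_le_left
    · refine le_trans (iInf_le _ 0) ?_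
      exact iSup_le fun n => iSup_le fun _ => inf_le_right
  exact hO (fun n => x n ⊓ a) ⟨b ⊓ a, hbO, key⟩
end

section
/- If x is a lim sup-stable sequence in a complete Boolean algebra B (i.e., limsup y = limsup x for every subsequence y of x), then the closure of {x_n : n ∈ ω} in the topology O_{λ_ls} equals (limsup x)↑ ∪ ⋃_{n∈ω} x_n↑. -/
section Helpers
open Filter
variable {B : Type*} [CompleteBooleanAlgebra B]

lemma bLimsup_mono' {u v : ℕ → B} (h : ∀ n, u n ≤ v n) : bLimsup u ≤ bLimsup v :=
  iInf_mono fun _ => iSup_mono fun n => iSup_mono fun _ => h n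

lemma le_bLimsup' (u : ℕ → B) (c : B) (h : ∀ n, c ≤ u n) : c ≤ bLimsup u :=
  le_iInf fun k => le_iSup_of_le k (le_iSup_of_le le_rfl (h k))

lemma bLimsup_comp_le' (u : ℕ → B) (g : ℕ → ℕ) (hg : StrictMono g) :
    bLimsup (u ∘ g) ≤ bLimsup u := by
  refine le_iInf fun k => (iInf_le _ k).trans ?_
  refine iSup_le fun m => iSup_le fun hm => ?_
  exact le_iSup_of_le (g m) (le_iSup_of_le (hm.trans hg.le_apply) le_rfl)

lemma bLimsup_const' (c : B) : bLimsup (fun _ : ℕ => c) = c :=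
  le_antisymm ((iInf_le _ 0).trans (iSup_le fun _ => iSup_le fun _ => le_rfl))
    (le_bLimsup' _ _ fun _ => le_rfl)

lemma exists_strictMono_comp' {k : ℕ → ℕ} (hk : Tendsto k atTop atTop) :
    ∃ h : ℕ → ℕ, StrictMono h ∧ StrictMono (k ∘ h) := by
  have H : ∀ i, ∃ j, i < j ∧ k i < k j := fun i =>
    (((hk.eventually_gt_atTop (k i)).and (eventually_gt_atTop i)).exists).imp
      fun j hj => ⟨hj.2, hj.1⟩
  set F : ℕ → ℕ := fun i => (H i).choose with hF
  refine ⟨fun n => F^[n] 0, strictMono_nat_of_lt_succ fun n => ?_,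
    strictMono_nat_of_lt_succ fun n => ?_⟩
  · rw [Function.iterate_succ_apply']
    exact (H _).choose_spec.1
  · show k (F^[n] 0) < k (F^[n + 1] 0)
    rw [Function.iterate_succ_apply']
    exact (H _).choose_spec.2

end Helpers

/-- If `x` is a lim sup-stable sequence (every subsequence has the same limsup),
then the closure of `{xₙ : n ∈ ω}` in `O_{λ_ls}` is
`(limsup x)↑ ∪ ⋃ₙ xₙ↑`. -/
theorem closure_of_limsup_stable {B : Type*} [CompleteBooleanAlgebra B]
    (x : ℕ → B) (hx : ∀ f : ℕ → ℕ, StrictMono f → bLimsup (x ∘ f) = bLimsup x) :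
    @closure B (convTop lamLs) {b : B | ∃ n, b = x n} =
      {b : B | bLimsup x ≤ b} ∪ ⋃ n, {b : B | x n ≤ b} := by
  classical
  letI : TopologicalSpace B := convTop lamLs
  set C : Set B := {b : B | bLimsup x ≤ b} ∪ ⋃ n, {b : B | x n ≤ b} with hC
  apply Set.Subset.antisymm
  · apply closure_minimal
    · rintro b ⟨n, rfl⟩
      exact Or.inr (Set.mem_iUnion.2 ⟨n, le_rfl⟩)
    · rw [← isOpen_compl_iff]
      intro y hy
      obtain ⟨a, haC, hay⟩ := hy
      have hay' : bLimsup y ≤ a := hay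
      have hna : ¬ bLimsup x ≤ a ∧ ∀ n, ¬ x n ≤ a := by
        have := haC
        simp only [hC, Set.mem_compl_iff, Set.mem_union, Set.mem_iUnion,
          Set.mem_setOf_eq, not_or, not_exists] at this
        exact this
      by_contra hev
      have hfreq : ∃ᶠ n in Filter.atTop, y n ∈ C := by
        rw [Filter.not_eventually] at hev
        exact hev.mono fun n hn => by simpa using hn
      have hfreq' : (∃ᶠ n in Filter.atTop, bLimsup x ≤ y n) ∨
          ∃ᶠ n in Filter.atTop, ∃ k, x k ≤ y n := by
        rw [← Filter.frequently_or_distrib]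
        refine hfreq.mono fun n hn => ?_
        simpa only [hC, Set.mem_union, Set.mem_iUnion, Set.mem_setOf_eq] using hn
      rcases hfreq' with h1 | h2
      · obtain ⟨g, hg, hgs⟩ := Filter.extraction_of_frequently_atTop h1
        exact hna.1 ((le_bLimsup' (y ∘ g) _ hgs).trans
          ((bLimsup_comp_le' y g hg).trans hay'))
      · obtain ⟨g, hg, hgs⟩ := Filter.extraction_of_frequently_atTop h2
        choose k hk using hgs
        by_cases hJ : ∃ J, ∃ᶠ i in Filter.atTop, k i = J
        · obtain ⟨J, hJf⟩ := hJ
          obtain ⟨h, hh, hhs⟩ := Filter.extraction_of_frequently_atTop hJf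
          refine hna.2 J ?_
          have : ∀ i, x J ≤ (y ∘ (g ∘ h)) i := fun i => by
            have := hk (h i); rw [hhs i] at this; exact this
          exact (le_bLimsup' _ _ this).trans
            ((bLimsup_comp_le' y (g ∘ h) (hg.comp hh)).trans hay')
        · push_neg at hJ
          have hkt : Filter.Tendsto k Filter.atTop Filter.atTop := by
            refine Filter.tendsto_atTop.2 fun K => ?_
            have : ∀ᶠ i in Filter.atTop, ∀ J ∈ Finset.range K, k i ≠ J :=
              (Finset.range K).eventually_all.2 fun J _ =>
                hJ J
            refine this.mono fun i hi => ?_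
            by_contra hlt
            exact hi (k i) (Finset.mem_range.2 (Nat.lt_of_not_le hlt)) rfl
          obtain ⟨h, hh, hkh⟩ := exists_strictMono_comp' hkt
          have key : bLimsup x ≤ a := by
            rw [← hx (k ∘ h) hkh]
            refine (bLimsup_mono' fun i => ?_).trans
              ((bLimsup_comp_le' y (g ∘ h) (hg.comp hh)).trans hay')
            exact hk (h i)
          exact hna.1 key
  · rintro b (hb | hb)
    · rw [mem_closure_iff]
      intro O hO hbO
      obtain ⟨n, hn⟩ := (hO x ⟨b, hbO, hb⟩).exists
      exact ⟨x n, hn, n, rfl⟩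
    · obtain ⟨n, hn⟩ := Set.mem_iUnion.1 hb
      rw [mem_closure_iff]
      intro O hO hbO
      have hb' : b ∈ lamLs (fun _ : ℕ => x n) := by
        show bLimsup (fun _ : ℕ => x n) ≤ b
        rw [bLimsup_const']
        exact hn
      obtain ⟨m, hm⟩ := (hO (fun _ => x n) ⟨b, hbO, hb'⟩).exists
      exact ⟨x n, hm, n, rfl⟩
end

section
/- Let λ be a convergence on X satisfying (L1) and (L2). Define λ*(y) = ⋂_{f} ⋃_{g} λ(y∘f∘g), where f, g range over strictly increasing functions ω → ω. Then λ* satisfies (L1), (L2), and (L3) (if every subsequence y of x has a further subsequence z with a ∈ λ*(z), then a ∈ λ*(x)), λ ≤ λ*, and λ* is the minimal such extension: λ* ≤ μ for every convergence μ ≥ λ satisfying (L1)-(L3). -/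
/-- The (L3)-closure `λ*` of a convergence:
`λ*(y) = ⋂_f ⋃_g λ(y ∘ f ∘ g)` with `f, g` strictly increasing. -/
def lamStar {X : Type*} (lam : (ℕ → X) → Set X) (y : ℕ → X) : Set X :=
  {a : X | ∀ f : ℕ → ℕ, StrictMono f →
    ∃ g : ℕ → ℕ, StrictMono g ∧ a ∈ lam (y ∘ f ∘ g)}

/-- If `λ` satisfies (L1) and (L2), then `λ*` satisfies (L1)-(L3), extends `λ`,
and is the minimal convergence extending `λ` and satisfying (L1)-(L3). -/
theorem lamStar_minimal {X : Type*}
    (lam : (ℕ → X) → Set X)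
    (hL1 : ∀ a : X, a ∈ lam (fun _ => a))
    (hL2 : ∀ (x : ℕ → X) (f : ℕ → ℕ), StrictMono f → lam x ⊆ lam (x ∘ f)) :
    (∀ a : X, a ∈ lamStar lam (fun _ => a)) ∧
    (∀ (x : ℕ → X) (f : ℕ → ℕ), StrictMono f →
        lamStar lam x ⊆ lamStar lam (x ∘ f)) ∧
    (∀ (x : ℕ → X) (a : X),
        (∀ f : ℕ → ℕ, StrictMono f →
          ∃ g : ℕ → ℕ, StrictMono g ∧ a ∈ lamStar lam ((x ∘ f) ∘ g)) →
        a ∈ lamStar lam x) ∧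
    (∀ x : ℕ → X, lam x ⊆ lamStar lam x) ∧
    (∀ mu : (ℕ → X) → Set X,
        (∀ x : ℕ → X, lam x ⊆ mu x) →
        (∀ a : X, a ∈ mu (fun _ => a)) →
        (∀ (x : ℕ → X) (f : ℕ → ℕ), StrictMono f → mu x ⊆ mu (x ∘ f)) →
        (∀ (x : ℕ → X) (a : X),
          (∀ f : ℕ → ℕ, StrictMono f →
            ∃ g : ℕ → ℕ, StrictMono g ∧ a ∈ mu ((x ∘ f) ∘ g)) →
          a ∈ mu x) →
        ∀ x : ℕ → X, lamStar lam x ⊆ mu x) := by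
  refine ⟨?_, ?_, ?_, ?_, ?_⟩
  · intro a f hf
    exact ⟨id, strictMono_id, hL1 a⟩
  · intro x f hf a ha f' hf'
    obtain ⟨g, hg, hmem⟩ := ha (f ∘ f') (hf.comp hf')
    exact ⟨g, hg, hmem⟩
  · intro x a h f hf
    obtain ⟨g, hg, hmem⟩ := h f hf
    obtain ⟨g', hg', hmem'⟩ := hmem id strictMono_id
    exact ⟨g ∘ g', hg.comp hg', hmem'⟩
  · intro x a ha f hf
    exact ⟨id, strictMono_id, hL2 x f hf ha⟩
  · intro mu hle hm1 hm2 hm3 x a ha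
    apply hm3
    intro f hf
    obtain ⟨g, hg, hmem⟩ := ha f hf
    exact ⟨g, hg, hle _ hmem⟩
end
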